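/- For r = 1, the Bourgain–Morrey space ℓ^p_{q,1}(ℤ) equals ℓ¹(ℤ) as a set, and the norms ‖·‖_{ℓ^p_{q,1}} and ‖·‖_{ℓ¹} are equivalent: there exist constants c, C > 0 with c‖x‖_{ℓ¹} ≤ ‖x‖_{ℓ^p_{q,1}} ≤ C‖x‖_{ℓ¹} for all x. -/

import Mathlib

open scoped ENNReal
open Finset Function

noncomputable section

/-- The dyadic interval `I(j,k) = [2^j k, 2^j (k+1)) ∩ ℤ`. -/
def dyadicI (j : ℕ) (k : ℤ) : Finset ℤ :=
  Finset.Ico ((2 ^ j : ℤ) * k) ((2 ^ j : ℤ) * (k + 1))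

/-- The dyadic Bourgain–Morrey norm `‖x‖_{ℓ^p_{q,r}}`. -/
def BMnorm (p q r : ℝ) (x : ℤ → ℝ) : ℝ≥0∞ :=
  (∑' jk : ℕ × ℤ,
      ((2 : ℝ≥0∞) ^ jk.1) ^ (r * (1 / q - 1 / p)) *
        (∑ l ∈ dyadicI jk.1 jk.2, ENNReal.ofReal (|x l| ^ p)) ^ (r / p)) ^ (1 / r)

/-- The classical `ℓ^r` norm of a sequence on `ℤ`. -/
def lNorm (r : ℝ) (x : ℤ → ℝ) : ℝ≥0∞ :=
  (∑' k : ℤ, ENNReal.ofReal (|x k| ^ r)) ^ (1 / r)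

end

lemma mem_dyadicI {j : ℕ} {k l : ℤ} : l ∈ dyadicI j k ↔ l / (2 ^ j : ℤ) = k := by
  have h2 : (0:ℤ) < 2 ^ j := by positivity
  constructor
  · intro hl
    simp only [dyadicI, Finset.mem_Ico] at hl
    refine le_antisymm ?_ ?_
    · have := (Int.ediv_lt_iff_lt_mul h2).mpr (by linarith [hl.2] : l < (k+1) * 2 ^ j)
      omega
    · exact (Int.le_ediv_iff_mul_le h2).mpr (by linarith [hl.1])
  · rintro rfl
    simp only [dyadicI, Finset.mem_Ico]
    have hd : (2:ℤ) ^ j * (l / 2 ^ j) + l % 2 ^ j = l := by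
      rw [Int.add_comm]; exact Int.emod_add_mul_ediv l (2 ^ j)
    have h1 := Int.emod_nonneg l (by positivity : (2:ℤ)^j ≠ 0)
    have h3 := Int.emod_lt_of_pos l h2
    constructor
    · linarith
    · have hexp : (2:ℤ) ^ j * (l / 2 ^ j + 1) = 2 ^ j * (l / 2 ^ j) + 2 ^ j := by ring
      linarith

lemma tsum_dyadic (j : ℕ) (f : ℤ → ℝ≥0∞) :
    ∑' k : ℤ, ∑ l ∈ dyadicI j k, f l = ∑' l : ℤ, f l := by
  have key : ∀ k : ℤ, ∑ l ∈ dyadicI j k, f l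
      = ∑' l : ℤ, if l / (2 ^ j : ℤ) = k then f l else 0 := by
    intro k
    rw [tsum_eq_sum (s := dyadicI j k) (fun l hl => by
      rw [if_neg (fun h => hl (mem_dyadicI.mpr h))])]
    exact (Finset.sum_congr rfl (fun l hl => by rw [if_pos (mem_dyadicI.mp hl)])).symm
  rw [tsum_congr key, ENNReal.tsum_comm]
  exact tsum_congr fun l => by
    rw [tsum_eq_single (l / (2 ^ j : ℤ)) (fun k hk => by rw [if_neg (fun h => hk h.symm)]),
      if_pos rfl]

lemma sum_rpow_le_rpow_sum {ι : Type*} (s : Finset ι) (f : ι → ℝ≥0∞) {p : ℝ} (hp : 1 ≤ p) :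
    ∑ i ∈ s, f i ^ p ≤ (∑ i ∈ s, f i) ^ p := by
  classical
  induction s using Finset.induction with
  | empty => simp [ENNReal.zero_rpow_of_pos (lt_of_lt_of_le zero_lt_one hp)]
  | insert _ _ h ih =>
      rw [Finset.sum_insert h, Finset.sum_insert h]
      exact le_trans (add_le_add_right ih _) (ENNReal.add_rpow_le_rpow_add _ _ hp)

/-- For `r = 1` the Bourgain–Morrey space coincides with `ℓ¹(ℤ)`, with
equivalent norms. -/
theorem BMnorm_r_eq_one (p q : ℝ) (hp : 1 ≤ p) (hpq : p < q) :
    ∃ c C : ℝ≥0∞, 0 < c ∧ 0 < C ∧ C ≠ ⊤ ∧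
      ∀ x : ℤ → ℝ,
        c * (∑' k : ℤ, ENNReal.ofReal |x k|) ≤ BMnorm p q 1 x ∧
        BMnorm p q 1 x ≤ C * (∑' k : ℤ, ENNReal.ofReal |x k|) := by
  have hp0 : (0:ℝ) < p := lt_of_lt_of_le zero_lt_one hp
  have hq0 : (0:ℝ) < q := lt_trans hp0 hpq
  set e : ℝ := 1 / q - 1 / p with he_def
  have he : e < 0 := by
    have : 1 / q < 1 / p := one_div_lt_one_div_of_lt hp0 hpq
    rw [he_def]; linarith
  have hr1 : (2:ℝ≥0∞) ^ e < 1 := by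
    calc (2:ℝ≥0∞) ^ e < 2 ^ (0:ℝ) :=
          ENNReal.rpow_lt_rpow_of_exponent_lt (by norm_num) (by norm_num) he
      _ = 1 := by simp
  refine ⟨1, (1 - (2:ℝ≥0∞) ^ e)⁻¹, zero_lt_one, ?_, ?_, ?_⟩
  · exact ENNReal.inv_pos.mpr (by
      exact ne_top_of_le_ne_top ENNReal.one_ne_top tsub_le_self)
  · rw [Ne, ENNReal.inv_eq_top]
    exact fun h => not_lt.mpr (tsub_eq_zero_iff_le.mp h) hr1
  intro x
  -- rewrite BMnorm
  have hBM : BMnorm p q 1 x = ∑' jk : ℕ × ℤ,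
      ((2 : ℝ≥0∞) ^ jk.1) ^ e *
        (∑ l ∈ dyadicI jk.1 jk.2, ENNReal.ofReal (|x l| ^ p)) ^ (1 / p) := by
    simp only [BMnorm, one_mul, he_def]
    norm_num
  have hofReal : ∀ l : ℤ, ENNReal.ofReal (|x l| ^ p) = (ENNReal.ofReal |x l|) ^ p :=
    fun l => (ENNReal.ofReal_rpow_of_nonneg (abs_nonneg _) hp0.le).symm
  have hinner : ∀ (j : ℕ) (k : ℤ),
      (∑ l ∈ dyadicI j k, ENNReal.ofReal (|x l| ^ p)) ^ (1 / p)
        ≤ ∑ l ∈ dyadicI j k, ENNReal.ofReal |x l| := by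
    intro j k
    calc (∑ l ∈ dyadicI j k, ENNReal.ofReal (|x l| ^ p)) ^ (1 / p)
        ≤ ((∑ l ∈ dyadicI j k, ENNReal.ofReal |x l|) ^ p) ^ (1 / p) := by
          apply ENNReal.rpow_le_rpow _ (by positivity)
          simp only [hofReal]
          exact sum_rpow_le_rpow_sum _ _ hp
      _ = ∑ l ∈ dyadicI j k, ENNReal.ofReal |x l| := by
          rw [← ENNReal.rpow_mul, mul_one_div_cancel hp0.ne', ENNReal.rpow_one]
  constructor
  · -- lower bound
    rw [one_mul, hBM, ENNReal.tsum_prod (f := fun j k => ((2:ℝ≥0∞)^j)^e * (∑ l ∈ dyadicI j k, ENNReal.ofReal (|x l| ^ p)) ^ (1/p))]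
    refine le_trans ?_ (ENNReal.le_tsum 0)
    apply le_of_eq
    refine (tsum_congr fun k => ?_).symm
    have hI : dyadicI 0 k = {k} := by
      ext l; simp [dyadicI]; omega
    rw [hI]
    simp only [pow_zero, ENNReal.one_rpow, one_mul, Finset.sum_singleton, hofReal]
    rw [← ENNReal.rpow_mul, mul_one_div_cancel hp0.ne', ENNReal.rpow_one]
  · -- upper bound
    rw [hBM, ENNReal.tsum_prod (f := fun j k => ((2:ℝ≥0∞)^j)^e * (∑ l ∈ dyadicI j k, ENNReal.ofReal (|x l| ^ p)) ^ (1/p))]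
    calc ∑' (j : ℕ), ∑' (k : ℤ), ((2 : ℝ≥0∞) ^ j) ^ e *
          (∑ l ∈ dyadicI j k, ENNReal.ofReal (|x l| ^ p)) ^ (1 / p)
        ≤ ∑' (j : ℕ), ∑' (k : ℤ), ((2 : ℝ≥0∞) ^ j) ^ e *
          (∑ l ∈ dyadicI j k, ENNReal.ofReal |x l|) := by
          exact ENNReal.tsum_le_tsum fun j => ENNReal.tsum_le_tsum fun k =>
            mul_le_mul_right (hinner j k) _
      _ = ∑' (j : ℕ), ((2 : ℝ≥0∞) ^ j) ^ e * ∑' k : ℤ,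
            ∑ l ∈ dyadicI j k, ENNReal.ofReal |x l| := by
          exact tsum_congr fun j => ENNReal.tsum_mul_left
      _ = ∑' (j : ℕ), ((2 : ℝ≥0∞) ^ j) ^ e * ∑' k : ℤ, ENNReal.ofReal |x k| := by
          exact tsum_congr fun j => by rw [tsum_dyadic]
      _ = (∑' (j : ℕ), ((2 : ℝ≥0∞) ^ j) ^ e) * ∑' k : ℤ, ENNReal.ofReal |x k| := by
          rw [ENNReal.tsum_mul_right]
      _ = (1 - (2:ℝ≥0∞) ^ e)⁻¹ * ∑' k : ℤ, ENNReal.ofReal |x k| := by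
          congr 1
          have : ∀ j : ℕ, ((2 : ℝ≥0∞) ^ j) ^ e = ((2:ℝ≥0∞) ^ e) ^ j := by
            intro j
            rw [← ENNReal.rpow_natCast 2 j, ← ENNReal.rpow_natCast ((2:ℝ≥0∞)^e) j,
              ← ENNReal.rpow_mul, ← ENNReal.rpow_mul, mul_comm]
          rw [tsum_congr this, ENNReal.tsum_geometric]
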